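/- Let σ = τ₁τ₂⋯τ_k ∈ S_n be a product of k pairwise disjoint cycles of length d with Fix(σ) = ∅. Suppose π₀ ∈ Cent₀(σ) fixes every point moved by τ_{m+1},...,τ_k and conjugation by π₀ permutes τ₁,...,τ_m cyclically, i.e. π₀τᵢπ₀⁻¹ = τ_{i+1} for 1 ≤ i < m and π₀τ_mπ₀⁻¹ = τ₁. Then there exists an integer z such that π₀^m = τ₁^z τ₂^z ⋯ τ_m^z. -/

import Mathlib

open Equiv Equiv.Perm Finset

/-- The "non-trivial centralizer" `Cent₀(σ)`: permutations commuting with `σ`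
whose support is contained in the support of `σ`. -/
def Cent0 {n : ℕ} (σ : Equiv.Perm (Fin n)) : Subgroup (Equiv.Perm (Fin n)) where
  carrier := {π | Commute π σ ∧ π.support ⊆ σ.support}
  one_mem' := ⟨Commute.one_left σ, by simp⟩
  mul_mem' := by
    intro a b ha hb
    exact ⟨ha.1.mul_left hb.1, (Equiv.Perm.support_mul_le a b).trans (sup_le ha.2 hb.2)⟩
  inv_mem' := by
    intro a ha
    exact ⟨ha.1.inv_left, by rw [Equiv.Perm.support_inv]; exact ha.2⟩

/-- The product `∏_{i ∈ s} τᵢ^{zᵢ}` of powers of pairwise disjoint permutations. -/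
def Kprod {n k : ℕ} (τ : Fin k → Equiv.Perm (Fin n))
    (hdisj : ∀ i j, i ≠ j → Equiv.Perm.Disjoint (τ i) (τ j))
    (s : Finset (Fin k)) (z : Fin k → ℤ) : Equiv.Perm (Fin n) :=
  s.noncommProd (fun i => τ i ^ z i)
    (fun a _ b _ hab => Commute.zpow_zpow ((hdisj a b hab).commute) _ _)

lemma list_prod_apply_eq_self' {α : Type*} (x : α) :
    ∀ (l : List (Equiv.Perm α)), (∀ f ∈ l, f x = x) → l.prod x = x
  | [], _ => by simp
  | f :: l, h => by
    rw [List.prod_cons, Equiv.Perm.mul_apply, list_prod_apply_eq_self' x l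
      (fun g hg => h g (List.mem_cons_of_mem _ hg))]
    exact h f List.mem_cons_self

lemma noncommProd_apply_eq_self' {α ι : Type*} (s : Finset ι) (f : ι → Equiv.Perm α) (comm)
    (x : α) (h : ∀ j ∈ s, f j x = x) : s.noncommProd f comm x = x := by
  induction s using Finset.cons_induction with
  | empty => simp
  | cons a s ha ih =>
    rw [Finset.noncommProd_cons, Equiv.Perm.mul_apply,
      ih _ (fun j hj => h j (Finset.mem_cons_of_mem hj)), h a (Finset.mem_cons_self a s)]

/-- The subgroup `H_σ = { x ∈ S_{X_σ} : xσx⁻¹ = σ^z for some integer z }`, as a set. -/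
def Hgrp {n : ℕ} (σ : Equiv.Perm (Fin n)) : Set (Equiv.Perm (Fin n)) :=
  {x | x.support ⊆ σ.support ∧ ∃ z : ℤ, x * σ * x⁻¹ = σ ^ z}

/-- Let `σ = τ₁⋯τ_k` be a product of `k` pairwise disjoint cycles of
length `d` with no fixed points. If `π₀ ∈ Cent₀(σ)` fixes every point moved by
`τ_{m+1},…,τ_k` and permutes `τ₁,…,τ_m` cyclically, then `π₀^m = τ₁^z⋯τ_m^z` for some
integer `z`. (Cycles are indexed by `Fin k`, so the first `m` cycles are those with
index `< m`.) -/
theorem pow_of_cyclically_permuting_element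
    {n k d m : ℕ} (σ : Equiv.Perm (Fin n)) (τ : Fin k → Equiv.Perm (Fin n))
    (hcyc : ∀ i, (τ i).IsCycle) (hlen : ∀ i, (τ i).support.card = d)
    (hdisj : ∀ i j, i ≠ j → Equiv.Perm.Disjoint (τ i) (τ j))
    (hσ : σ = (List.ofFn τ).prod)
    (hfix : ∀ x : Fin n, σ x ≠ x)
    (hm0 : 0 < m) (hm : m ≤ k)
    (π₀ : Equiv.Perm (Fin n)) (hπ₀ : π₀ ∈ Cent0 σ)
    (hfixes : ∀ j : Fin k, m ≤ (j : ℕ) → ∀ x ∈ (τ j).support, π₀ x = x)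
    (hcyclic : ∀ i : ℕ, ∀ h : i < m,
      π₀ * τ ⟨i, lt_of_lt_of_le h hm⟩ * π₀⁻¹ =
        τ ⟨(i + 1) % m, lt_of_lt_of_le (Nat.mod_lt _ hm0) hm⟩) :
    ∃ z : ℤ, π₀ ^ m =
      Kprod τ hdisj (Finset.univ.filter fun i : Fin k => (i : ℕ) < m) (fun _ => z) := by
  set ι0 : Fin k := ⟨0, lt_of_lt_of_le hm0 hm⟩ with hι0
  -- iterated conjugation
  have key : ∀ j : ℕ, π₀ ^ j * τ ι0 * (π₀ ^ j)⁻¹ =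
      τ ⟨j % m, lt_of_lt_of_le (Nat.mod_lt _ hm0) hm⟩ := by
    intro j
    induction j with
    | zero =>
      simp only [pow_zero, one_mul, inv_one, mul_one]
      congr 1
    | succ j ih =>
      have hstep : π₀ ^ (j + 1) * τ ι0 * (π₀ ^ (j + 1))⁻¹ =
          π₀ * (π₀ ^ j * τ ι0 * (π₀ ^ j)⁻¹) * π₀⁻¹ := by group
      rw [hstep, ih, hcyclic (j % m) (Nat.mod_lt _ hm0)]
      congr 1
      exact Fin.ext (Nat.mod_add_mod j m 1)
  have conj_i : ∀ (i : ℕ) (h : i < m),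
      π₀ ^ i * τ ι0 * (π₀ ^ i)⁻¹ = τ ⟨i, lt_of_lt_of_le h hm⟩ := by
    intro i h
    rw [key i]
    congr 1
    exact Fin.ext (Nat.mod_eq_of_lt h)
  have comm0 : Commute (π₀ ^ m) (τ ι0) := by
    have := key m
    have h0 : (⟨m % m, lt_of_lt_of_le (Nat.mod_lt _ hm0) hm⟩ : Fin k) = ι0 :=
      Fin.ext (by simp [hι0])
    rw [h0] at this
    unfold Commute SemiconjBy
    calc π₀ ^ m * τ ι0 = (π₀ ^ m * τ ι0 * (π₀ ^ m)⁻¹) * π₀ ^ m := by group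
      _ = τ ι0 * π₀ ^ m := by rw [this]
  obtain ⟨x₀, hx₀, hall⟩ := hcyc ι0
  have hfx₀ : τ ι0 ((π₀ ^ m) x₀) ≠ (π₀ ^ m) x₀ := by
    intro h
    apply hx₀
    have h1 : (π₀ ^ m) (τ ι0 x₀) = τ ι0 ((π₀ ^ m) x₀) := by
      rw [← Equiv.Perm.mul_apply, ← Equiv.Perm.mul_apply, comm0.eq]
    rw [h] at h1
    exact (π₀ ^ m).injective h1
  obtain ⟨z, hz⟩ := hall hfx₀
  refine ⟨z, ?_⟩
  have agree0 : ∀ y, τ ι0 y ≠ y → (π₀ ^ m) y = (τ ι0 ^ z) y := by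
    intro y hy
    obtain ⟨w, hw⟩ := hall hy
    have hc : Commute (π₀ ^ m) (τ ι0 ^ w) := comm0.zpow_right w
    calc (π₀ ^ m) y = (π₀ ^ m) ((τ ι0 ^ w) x₀) := by rw [hw]
      _ = (τ ι0 ^ w) ((π₀ ^ m) x₀) := by
          rw [← Equiv.Perm.mul_apply, ← Equiv.Perm.mul_apply, hc.eq]
      _ = (τ ι0 ^ w) ((τ ι0 ^ z) x₀) := by rw [hz]
      _ = (τ ι0 ^ z) ((τ ι0 ^ w) x₀) := by
          rw [← Equiv.Perm.mul_apply, ← Equiv.Perm.mul_apply, (Commute.zpow_zpow_self _ _ _).eq]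
      _ = (τ ι0 ^ z) y := by rw [hw]
  have agree : ∀ (i : ℕ) (h : i < m) (x : Fin n), τ ⟨i, lt_of_lt_of_le h hm⟩ x ≠ x →
      (π₀ ^ m) x = (τ ⟨i, lt_of_lt_of_le h hm⟩ ^ z) x := by
    intro i h x hx
    have hconj := conj_i i h
    have hyy : τ ι0 ((π₀ ^ i)⁻¹ x) ≠ (π₀ ^ i)⁻¹ x := by
      intro hyeq
      apply hx
      rw [← hconj]
      simp only [Equiv.Perm.mul_apply]
      rw [hyeq]
      simp
    have conjz : π₀ ^ i * (τ ι0) ^ z * (π₀ ^ i)⁻¹ = τ ⟨i, lt_of_lt_of_le h hm⟩ ^ z := by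
      rw [← hconj, conj_zpow]
    have hcm : π₀ ^ m = π₀ ^ i * π₀ ^ m * (π₀ ^ i)⁻¹ := by group
    rw [← conjz, hcm]
    simp only [Equiv.Perm.mul_apply]
    rw [agree0 _ hyy]
  -- now the pointwise proof
  apply Equiv.ext
  intro x
  have hex : ∃ i : Fin k, τ i x ≠ x := by
    by_contra hcon
    push_neg at hcon
    apply hfix x
    rw [hσ]
    exact list_prod_apply_eq_self' x _ (by
      intro f hf
      obtain ⟨i, rfl⟩ := List.mem_ofFn.mp hf
      exact hcon i)
  obtain ⟨i, hi⟩ := hex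
  have hfixed_of_ne : ∀ j : Fin k, j ≠ i → (τ j ^ z) x = x := by
    intro j hj
    have : τ j x = x := by
      by_contra hjx
      exact ((hdisj j i hj).mem_imp (Equiv.Perm.mem_support.mpr hjx))
        (Equiv.Perm.mem_support.mpr hi)
    exact Equiv.Perm.zpow_apply_eq_self_of_apply_eq_self this z
  have hKc : ((Finset.univ.filter fun i : Fin k => (i : ℕ) < m) : Set (Fin k)).Pairwise
      (Function.onFun Commute fun i => τ i ^ z) := by
    intro a _ b _ hab; exact Commute.zpow_zpow ((hdisj a b hab).commute) _ _
  have hK : Kprod τ hdisj (Finset.univ.filter fun i : Fin k => (i : ℕ) < m) (fun _ => z) =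
      (Finset.univ.filter fun i : Fin k => (i : ℕ) < m).noncommProd (fun i => τ i ^ z) hKc := rfl
  by_cases him : (i : ℕ) < m
  · have hmem : i ∈ Finset.univ.filter (fun j : Fin k => (j : ℕ) < m) := by
      simp [him]
    have hi' : (⟨(i : ℕ), lt_of_lt_of_le him hm⟩ : Fin k) = i := Fin.ext rfl
    rw [hK]
    rw [← Finset.mul_noncommProd_erase _ hmem _ _]
    rw [Equiv.Perm.mul_apply]
    refine Eq.trans ?_ (congrArg (τ i ^ z) (noncommProd_apply_eq_self' _ _ _ x (by
      intro j hj
      exact hfixed_of_ne j (Finset.ne_of_mem_erase hj)))).symm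
    have := agree (i : ℕ) him x (by rw [hi']; exact hi)
    rw [hi'] at this
    exact this
  · push_neg at him
    have hπx : π₀ x = x := hfixes i him x (Equiv.Perm.mem_support.mpr hi)
    rw [Equiv.Perm.pow_apply_eq_self_of_apply_eq_self hπx m]
    rw [hK]
    rw [noncommProd_apply_eq_self' _ _ _ x (by
      intro j hj
      simp only [Finset.mem_filter] at hj
      exact hfixed_of_ne j (by
        intro hji
        rw [hji] at hj
        exact absurd hj.2 (not_lt.mpr him)))]
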